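/- arXiv:1404.2829 — 3 statements merged into one kernel-verified Lean document; each statement's English description precedes it below -/
import Mathlib

section
/- Let F : R → R be continuous with F > 0. Then any two solutions of the ODE x'(t) = F(x(t)) with the same initial condition x(0) = a coincide on the intersection of their domains, i.e. solutions of y' = F(y) with F > 0 continuous are unique. -/
private lemma const_on_aux {f : ℝ → ℝ} {s : Set ℝ} (hs : IsOpen s) (hc : Convex ℝ s)
    (hf : ∀ u ∈ s, HasDerivAt f 0 u) {u v : ℝ} (hu : u ∈ s) (hv : v ∈ s) : f u = f v := by
  refine hc.is_const_of_fderivWithin_eq_zero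
    (fun z hz => (hf z hz).differentiableAt.differentiableWithinAt) (fun z hz => ?_) hu hv
  rw [fderivWithin_eq_fderiv (hs.uniqueDiffOn z hz) (hf z hz).differentiableAt,
    (hf z hz).hasFDerivAt.fderiv]
  ext
  simp

/- STATEMENT 1: uniqueness of solutions of x' = F(x), x(0) = a, for F continuous and positive. -/
theorem stmt_1 (F : ℝ → ℝ) (hF : Continuous F) (hFpos : ∀ y, 0 < F y)
    (s t : Set ℝ) (hs : IsOpen s) (hs' : s.OrdConnected) (ht : IsOpen t) (ht' : t.OrdConnected)
    (h0s : (0 : ℝ) ∈ s) (h0t : (0 : ℝ) ∈ t)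
    (x y : ℝ → ℝ) (a : ℝ)
    (hx : ∀ u ∈ s, HasDerivAt x (F (x u)) u)
    (hy : ∀ u ∈ t, HasDerivAt y (F (y u)) u)
    (hx0 : x 0 = a) (hy0 : y 0 = a) :
    ∀ u ∈ s ∩ t, x u = y u := by
  have hFne : ∀ w, F w ≠ 0 := fun w => (hFpos w).ne'
  have hFinv : Continuous fun w => (F w)⁻¹ := hF.inv₀ hFne
  set G : ℝ → ℝ := fun z => ∫ w in a..z, (F w)⁻¹ with hG
  have hGderiv : ∀ z, HasDerivAt G (F z)⁻¹ z := fun z =>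
    intervalIntegral.integral_hasDerivAt_right (hFinv.intervalIntegrable a z)
      (hFinv.stronglyMeasurable.stronglyMeasurableAtFilter) hFinv.continuousAt
  have hGmono : StrictMono G := by
    apply strictMono_of_deriv_pos
    intro z
    rw [(hGderiv z).deriv]
    exact inv_pos.mpr (hFpos z)
  have key : ∀ (z : ℝ → ℝ) (w : Set ℝ), IsOpen w → w.OrdConnected → (0:ℝ) ∈ w → z 0 = a →
      (∀ u ∈ w, HasDerivAt z (F (z u)) u) → ∀ u ∈ w, G (z u) = u := by
    intro z w hw hw' h0w hz0 hz u hu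
    have hconst : ∀ v ∈ w, HasDerivAt (fun v => G (z v) - v) 0 v := by
      intro v hv
      have h1 : HasDerivAt (fun v => G (z v)) ((F (z v))⁻¹ * F (z v)) v :=
        (hGderiv (z v)).comp v (hz v hv)
      have := h1.sub (hasDerivAt_id v)
      rw [inv_mul_cancel₀ (hFne (z v)), sub_self] at this
      exact this
    have := const_on_aux hw (convex_iff_ordConnected.mpr hw') hconst hu h0w
    simp only [hz0] at this
    have hGa : G a = 0 := by simp [hG]
    linarith [this, hGa]
  intro u hu
  have h1 := key x s hs hs' h0s hx0 hx u hu.1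
  have h2 := key y t ht ht' h0t hy0 hy u hu.2
  exact hGmono.injective (h1.trans h2.symm)
end

section
/- Let h : S^1 → S^1 be a non-decreasing map of degree one, let G(h) denote the 'filled graph' of h (the union of vertical segments {x}×[h_l(x), h_r(x)]), and suppose f, g are circle homeomorphisms with g ∘ h = h ∘ f. Then the map (x,y) ↦ (f(x), g(y)) maps G(h) onto G(h), and hence maps M_h = S^1×S^1 ∖ G(h) onto M_h. -/
lemma per_surjective (f : ℝ → ℝ) (hf : Monotone f) (hfc : Continuous f)
    (hfper : ∀ x, f (x + 1) = f x + 1) : Function.Surjective f := by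
  have hint : ∀ n : ℤ, ∀ x, f (x + n) = f x + n := by
    intro n
    induction n using Int.induction_on with
    | zero => simp
    | succ k ih => intro x; push_cast; rw [← add_assoc, hfper]; push_cast at ih; rw [ih]; ring
    | pred k ih =>
        intro x
        have := hfper (x + (-(k:ℝ) - 1))
        push_cast
        push_cast at ih
        have h2 : f (x + (-(k:ℝ) - 1) + 1) = f (x + (-(k:ℝ) - 1)) + 1 := hfper _
        have h3 : x + (-(k:ℝ) - 1) + 1 = x + -(k:ℝ) := by ring
        rw [h3] at h2
        rw [ih x] at h2
        linarith
  intro y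
  obtain ⟨n, hn⟩ := exists_int_ge (y - f 0)
  obtain ⟨m, hm⟩ := exists_int_le (y - f 0)
  have hmn : (m:ℝ) ≤ n := le_trans hm hn
  have hm' : f m ≤ y := by have := hint m 0; simp at this; rw [this]; linarith
  have hn' : y ≤ f n := by have := hint n 0; simp at this; rw [this]; linarith
  have hmn' : (m:ℝ) ≤ (n:ℝ) := hmn
  obtain ⟨x, _, hx⟩ := intermediate_value_Icc hmn' hfc.continuousOn ⟨hm', hn'⟩
  exact ⟨x, hx⟩

theorem stmt_5 (h f g : ℝ → ℝ)
    (hh : Monotone h) (hhper : ∀ x, h (x + 1) = h x + 1)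
    (hf : StrictMono f) (hfc : Continuous f) (hfper : ∀ x, f (x + 1) = f x + 1)
    (hg : StrictMono g) (hgc : Continuous g) (hgper : ∀ x, g (x + 1) = g x + 1)
    (hsemi : g ∘ h = h ∘ f) :
    (fun p : ℝ × ℝ => (f p.1, g p.2)) ''
        {p : ℝ × ℝ | sSup (h '' Set.Iio p.1) ≤ p.2 ∧ p.2 ≤ sInf (h '' Set.Ioi p.1)} =
      {p : ℝ × ℝ | sSup (h '' Set.Iio p.1) ≤ p.2 ∧ p.2 ≤ sInf (h '' Set.Ioi p.1)} ∧
    (fun p : ℝ × ℝ => (f p.1, g p.2)) ''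
        {p : ℝ × ℝ | sSup (h '' Set.Iio p.1) ≤ p.2 ∧ p.2 ≤ sInf (h '' Set.Ioi p.1)}ᶜ =
      {p : ℝ × ℝ | sSup (h '' Set.Iio p.1) ≤ p.2 ∧ p.2 ≤ sInf (h '' Set.Ioi p.1)}ᶜ := by
  have hfsurj : Function.Surjective f := per_surjective f hf.monotone hfc hfper
  have hgsurj : Function.Surjective g := per_surjective g hg.monotone hgc hgper
  set F : ℝ ≃o ℝ := StrictMono.orderIsoOfSurjective f hf hfsurj with hF
  have hFf : ∀ x, F x = f x := fun x => rfl
  -- f '' Iio x = Iio (f x)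
  have himIio : ∀ x, f '' Set.Iio x = Set.Iio (f x) := by
    intro x
    have := F.image_Iio x
    simpa [hFf] using this
  have himIoi : ∀ x, f '' Set.Ioi x = Set.Ioi (f x) := by
    intro x
    have := F.image_Ioi x
    simpa [hFf] using this
  have hsemi' : ∀ x, g (h x) = h (f x) := fun x => congrFun hsemi x
  -- key identities
  have keyl : ∀ x, g (sSup (h '' Set.Iio x)) = sSup (h '' Set.Iio (f x)) := by
    intro x
    have hne : (h '' Set.Iio x).Nonempty := ⟨h (x - 1), ⟨x - 1, by simp, rfl⟩⟩
    have hbdd : BddAbove (h '' Set.Iio x) := by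
      refine ⟨h x, ?_⟩
      rintro y ⟨z, hz, rfl⟩
      exact hh (le_of_lt hz)
    rw [hg.monotone.map_csSup_of_continuousAt hgc.continuousAt hne hbdd,
      Set.image_image, funext hsemi', ← Set.image_image, himIio]
  have keyr : ∀ x, g (sInf (h '' Set.Ioi x)) = sInf (h '' Set.Ioi (f x)) := by
    intro x
    have hne : (h '' Set.Ioi x).Nonempty := ⟨h (x + 1), ⟨x + 1, by simp, rfl⟩⟩
    have hbdd : BddBelow (h '' Set.Ioi x) := by
      refine ⟨h x, ?_⟩
      rintro y ⟨z, hz, rfl⟩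
      exact hh (le_of_lt hz)
    rw [hg.monotone.map_csInf_of_continuousAt hgc.continuousAt hne hbdd,
      Set.image_image, funext hsemi', ← Set.image_image, himIoi]
  set G : Set (ℝ × ℝ) :=
    {p : ℝ × ℝ | sSup (h '' Set.Iio p.1) ≤ p.2 ∧ p.2 ≤ sInf (h '' Set.Ioi p.1)} with hG
  have hmem : ∀ p : ℝ × ℝ, (f p.1, g p.2) ∈ G ↔ p ∈ G := by
    rintro ⟨x, y⟩
    simp only [hG, Set.mem_setOf_eq]
    rw [← keyl, ← keyr, hg.le_iff_le, hg.le_iff_le]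
  have hbij : Function.Bijective (fun p : ℝ × ℝ => (f p.1, g p.2)) := by
    constructor
    · rintro ⟨a, b⟩ ⟨c, d⟩ he
      simp only [Prod.mk.injEq] at he
      exact Prod.ext (hf.injective he.1) (hg.injective he.2)
    · rintro ⟨a, b⟩
      obtain ⟨x, hx⟩ := hfsurj a
      obtain ⟨y, hy⟩ := hgsurj b
      exact ⟨(x, y), by simp [hx, hy]⟩
  have himG : (fun p : ℝ × ℝ => (f p.1, g p.2)) '' G = G := by
    ext p
    constructor
    · rintro ⟨q, hq, rfl⟩
      exact (hmem q).2 hq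
    · intro hp
      obtain ⟨q, rfl⟩ := hbij.2 p
      exact ⟨q, (hmem q).1 hp, rfl⟩
  refine ⟨himG, ?_⟩
  rw [Set.image_compl_eq hbij, himG]
end

section
/- Let f and g be orientation-preserving circle homeomorphisms semi-conjugate via a non-decreasing degree-one map h (g ∘ h = h ∘ f). If g has no fixed point and x is a discontinuity point of h, then the open interval (h_l(x), h_r(x)) is disjoint from its image under g. -/
/- STATEMENT 13: circle = ℝ/ℤ, maps represented by lifts.  h is a monotone degree-one map,
f, g lifts of orientation-preserving circle homeomorphisms with g ∘ h = h ∘ f, and g has no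
fixed point on the circle (g x ≠ x + m for every integer m).  If x is a discontinuity point
of h, i.e. h_l(x) = sup h(Iio x) < inf h(Ioi x) = h_r(x), then the jump interval
(h_l(x), h_r(x)) is disjoint from its image under g. -/
theorem stmt_13 (h f g : ℝ → ℝ)
    (hh : Monotone h) (hhper : ∀ x, h (x + 1) = h x + 1)
    (hf : StrictMono f) (hfc : Continuous f) (hfper : ∀ x, f (x + 1) = f x + 1)
    (hg : StrictMono g) (hgc : Continuous g) (hgper : ∀ x, g (x + 1) = g x + 1)
    (hsemi : g ∘ h = h ∘ f)
    (hnofix : ∀ (x : ℝ) (m : ℤ), g x ≠ x + m)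
    (x : ℝ) (hdisc : sSup (h '' Set.Iio x) < sInf (h '' Set.Ioi x)) :
    Disjoint (Set.Ioo (sSup (h '' Set.Iio x)) (sInf (h '' Set.Ioi x)))
      (g '' Set.Ioo (sSup (h '' Set.Iio x)) (sInf (h '' Set.Ioi x))) := by
  -- integer periodicity for any lift-like map
  have hperZ : ∀ (φ : ℝ → ℝ), (∀ y, φ (y + 1) = φ y + 1) →
      ∀ (y : ℝ) (k : ℤ), φ (y + k) = φ y + k := by
    intro φ hφ y k
    induction k using Int.induction_on with
    | zero => simp
    | succ n ih =>
      push_cast at ih ⊢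
      have e1 : y + ((n : ℝ) + 1) = (y + n) + 1 := by ring
      rw [e1, hφ, ih]
      ring
    | pred n ih =>
      push_cast at ih ⊢
      have h1 := hφ (y + (-(n : ℝ) - 1))
      have e1 : y + (-(n : ℝ) - 1) + 1 = y + -(n : ℝ) := by ring
      rw [e1, ih] at h1
      have e2 : y + (-(n : ℝ) + -1) = y + (-(n : ℝ) - 1) := by ring
      rw [show (-(n:ℝ) - 1) = -(n:ℝ) + -1 by ring] at h1 ⊢
      linarith
  -- surjectivity of continuous monotone lifts
  have surj : ∀ (φ : ℝ → ℝ), Continuous φ → Monotone φ → (∀ y, φ (y + 1) = φ y + 1) →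
      Function.Surjective φ := by
    intro φ φc φm φp
    have hZ := hperZ φ φp
    apply φc.surjective
    · apply Filter.tendsto_atTop_mono (fun y => ?_)
        (Filter.tendsto_atTop_add_const_right _ (φ 0 - 1) Filter.tendsto_id)
      have h1 : φ (0 + (⌊y⌋ : ℝ)) ≤ φ y := φm (by simpa using Int.floor_le y)
      rw [hZ 0 ⌊y⌋] at h1
      have := Int.sub_one_lt_floor y
      simp only [Filter.tendsto_id, id] at *
      linarith
    · apply Filter.tendsto_atBot_mono (fun y => ?_)
        (Filter.tendsto_atBot_add_const_right _ (φ 0 + 1) Filter.tendsto_id)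
      have h1 : φ y ≤ φ (0 + ((⌊y⌋ + 1 : ℤ) : ℝ)) := φm (by push_cast; linarith [Int.lt_floor_add_one y])
      rw [hZ 0 (⌊y⌋ + 1)] at h1
      have := Int.floor_le y
      push_cast at h1
      simp only [id] at *
      linarith
  have gsurj := surj g hgc hg.monotone hgper
  have fsurj := surj f hfc hf.monotone hfper
  set G := StrictMono.orderIsoOfSurjective g hg gsurj with hGdef
  set F := StrictMono.orderIsoOfSurjective f hf fsurj with hFdef
  have hGcoe : ⇑G = g := rfl
  have hFcoe : ⇑F = f := rfl
  -- boundedness and nonemptiness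
  have bddA : ∀ y : ℝ, BddAbove (h '' Set.Iio y) :=
    fun y => ⟨h y, by rintro _ ⟨z, hz, rfl⟩; exact hh hz.le⟩
  have bddB : ∀ y : ℝ, BddBelow (h '' Set.Ioi y) :=
    fun y => ⟨h y, by rintro _ ⟨z, hz, rfl⟩; exact hh hz.le⟩
  have neA : ∀ y : ℝ, (h '' Set.Iio y).Nonempty :=
    fun y => ⟨h (y - 1), ⟨y - 1, by simp, rfl⟩⟩
  have neB : ∀ y : ℝ, (h '' Set.Ioi y).Nonempty :=
    fun y => ⟨h (y + 1), ⟨y + 1, by simp, rfl⟩⟩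
  set L := sSup (h '' Set.Iio x) with hL
  set R := sInf (h '' Set.Ioi x) with hR
  set y := f x with hy
  -- images of half-lines under g via semiconjugacy
  have himgf1 : f '' Set.Iio x = Set.Iio (f x) := F.image_Iio x
  have himgf2 : f '' Set.Ioi x = Set.Ioi (f x) := F.image_Ioi x
  have imgIio : g '' (h '' Set.Iio x) = h '' Set.Iio y := by
    rw [← Set.image_comp, hsemi, Set.image_comp, himgf1, ← hy]
  have imgIoi : g '' (h '' Set.Ioi x) = h '' Set.Ioi y := by
    rw [← Set.image_comp, hsemi, Set.image_comp, himgf2, ← hy]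
  have gL : g L = sSup (h '' Set.Iio y) := by
    rw [hL, ← hGcoe, G.map_csSup' (neA x) (bddA x), hGcoe, imgIio]
  have gR : g R = sInf (h '' Set.Ioi y) := by
    rw [hR, ← hGcoe, G.map_csInf' (neB x) (bddB x), hGcoe, imgIoi]
  -- translation of sups/infs by integers
  have supShift : ∀ (z : ℝ) (k : ℤ), sSup (h '' Set.Iio (z + k)) = sSup (h '' Set.Iio z) + k := by
    intro z k
    have him : h '' Set.Iio (z + (k : ℝ)) = (fun t => t + (k : ℝ)) '' (h '' Set.Iio z) := by
      rw [← Set.image_add_const_Iio (k : ℝ) z, ← Set.image_comp, ← Set.image_comp]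
      apply Set.image_congr
      intro t _
      exact hperZ h hhper t k
    rw [him]
    have := (OrderIso.addRight (k : ℝ)).map_csSup' (neA z) (bddA z)
    simpa using this.symm
  have infShift : ∀ (z : ℝ) (k : ℤ), sInf (h '' Set.Ioi (z + k)) = sInf (h '' Set.Ioi z) + k := by
    intro z k
    have him : h '' Set.Ioi (z + (k : ℝ)) = (fun t => t + (k : ℝ)) '' (h '' Set.Ioi z) := by
      rw [← Set.image_add_const_Ioi (k : ℝ) z, ← Set.image_comp, ← Set.image_comp]
      apply Set.image_congr
      intro t _
      exact hperZ h hhper t k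
    rw [him]
    have := (OrderIso.addRight (k : ℝ)).map_csInf' (neB z) (bddB z)
    simpa using this.symm
  -- y is not congruent to x mod 1
  have hync : ∀ k : ℤ, y ≠ x + k := by
    intro k hk
    have h1 : g (h x) = h y := congrFun hsemi x
    rw [hk, hperZ h hhper x k] at h1
    exact hnofix (h x) k h1
  set k := ⌊y - x⌋ with hk
  have hk1 : x + (k : ℝ) < y := by
    have h1 : (k : ℝ) ≤ y - x := Int.floor_le _
    rcases lt_or_eq_of_le h1 with h2 | h2
    · linarith
    · exact absurd (by linarith : y = x + k) (hync k)
  have hk2 : y < x + ((k : ℝ) + 1) := by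
    have := Int.lt_floor_add_one (y - x)
    linarith
  -- key inequalities between jump intervals
  have key1 : R + (k : ℝ) ≤ sSup (h '' Set.Iio y) := by
    set z := (x + (k : ℝ) + y) / 2 with hz
    have hz1 : x + (k : ℝ) < z := by rw [hz]; linarith
    have hz2 : z < y := by rw [hz]; linarith
    have h1 : sInf (h '' Set.Ioi (x + (k : ℝ))) ≤ h z :=
      csInf_le (bddB _) ⟨z, hz1, rfl⟩
    have h2 : h z ≤ sSup (h '' Set.Iio y) := le_csSup (bddA _) ⟨z, hz2, rfl⟩
    rw [infShift x k] at h1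
    linarith
  have key2 : sInf (h '' Set.Ioi y) ≤ L + ((k : ℝ) + 1) := by
    set z := (y + (x + ((k : ℝ) + 1))) / 2 with hz
    have hz1 : y < z := by rw [hz]; linarith
    have hz2 : z < x + ((k : ℝ) + 1) := by rw [hz]; linarith
    have h1 : sInf (h '' Set.Ioi y) ≤ h z := csInf_le (bddB _) ⟨z, hz1, rfl⟩
    have h2 : h z ≤ sSup (h '' Set.Iio (x + ((k : ℝ) + 1))) := le_csSup (bddA _) ⟨z, hz2, rfl⟩
    have h3 := supShift x (k + 1)
    push_cast at h3
    rw [h3] at h2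
    linarith
  -- rewrite the image of the jump interval
  have himg : g '' Set.Ioo L R = Set.Ioo (sSup (h '' Set.Iio y)) (sInf (h '' Set.Ioi y)) := by
    rw [← hGcoe, G.image_Ioo, hGcoe, gL, gR]
  rw [himg, Set.disjoint_left]
  rintro a ⟨ha1, ha2⟩ ⟨hb1, hb2⟩
  rcases le_or_gt 0 (k : ℝ) with hk0 | hk0
  · linarith
  · have : (k : ℝ) ≤ -1 := by
      have : k < 0 := by exact_mod_cast hk0
      have : k ≤ -1 := by omega
      exact_mod_cast this
    linarith
end
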